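/- Let V be a finite type with card V = m ≥ 1, let R be a binary relation on V, let s, t ∈ V, and let R' be the relation R together with the additional pair (t,t). Then t is reachable from s under R (i.e., Relation.ReflTransGen R s t) if and only if there exists a function f : Fin (m+1) → V with f 0 = s, f m = t, and R' (f i) (f (i+1)) for every i < m; that is, reachability holds if and only if there is an R'-path of length exactly m from s to t. -/

import Mathlib

private lemma aux_path_shrink {V : Type} [Fintype V] {m : ℕ}
    (hm : Fintype.card V = m) (R' : V → V → Prop) (s t : V) :
    ∀ n, (∃ f : ℕ → V, f 0 = s ∧ f n = t ∧ ∀ i < n, R' (f i) (f (i + 1))) →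
      ∃ k ≤ m, ∃ f : ℕ → V, f 0 = s ∧ f k = t ∧ ∀ i < k, R' (f i) (f (i + 1)) := by
  intro n
  induction n using Nat.strong_induction_on with
  | _ n ih =>
    rintro ⟨f, h0, hn, hstep⟩
    by_cases hnm : n ≤ m
    · exact ⟨n, hnm, f, h0, hn, hstep⟩
    · have hcard : Fintype.card V < Fintype.card (Fin (n + 1)) := by
        simp only [Fintype.card_fin, hm]; omega
      obtain ⟨a, b, hab, heq⟩ :=
        Fintype.exists_ne_map_eq_of_card_lt (fun x : Fin (n + 1) => f x.val) hcard
      obtain ⟨i, j, hij, hjn, hfij⟩ : ∃ i j, i < j ∧ j ≤ n ∧ f i = f j := by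
        rcases lt_or_gt_of_ne (fun h => hab (Fin.ext h)) with h | h
        · exact ⟨a, b, h, Nat.lt_succ_iff.mp b.isLt, heq⟩
        · exact ⟨b, a, h, Nat.lt_succ_iff.mp a.isLt, heq.symm⟩
      have hlt : n - (j - i) < n := by omega
      refine ih _ hlt ⟨fun k => if k ≤ i then f k else f (k + (j - i)), ?_, ?_, ?_⟩
      · simp [h0]
      · show (if n - (j - i) ≤ i then f (n - (j - i)) else f (n - (j - i) + (j - i))) = t
        by_cases h : n - (j - i) ≤ i
        · have hi' : n - (j - i) = i := by omega
          have hjn' : j = n := by omega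
          rw [if_pos h, hi', hfij, hjn', hn]
        · rw [if_neg h, show n - (j - i) + (j - i) = n by omega, hn]
      · intro k hk
        show R' (if k ≤ i then f k else f (k + (j - i)))
            (if k + 1 ≤ i then f (k + 1) else f (k + 1 + (j - i)))
        by_cases h1 : k + 1 ≤ i
        · rw [if_pos (by omega), if_pos h1]
          exact hstep k (by omega)
        · rw [if_neg h1]
          by_cases h2 : k ≤ i
          · have hki : k = i := by omega
            rw [if_pos h2, show k + 1 + (j - i) = j + 1 by omega, hki, hfij]
            exact hstep j (by omega)
          · rw [if_neg h2, show k + 1 + (j - i) = k + (j - i) + 1 by omega]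
            exact hstep _ (by omega)

private lemma aux_path_exists {V : Type} (R' : V → V → Prop) (s t : V)
    (h : Relation.ReflTransGen R' s t) :
    ∃ n, ∃ f : ℕ → V, f 0 = s ∧ f n = t ∧ ∀ i < n, R' (f i) (f (i + 1)) := by
  induction h with
  | refl => exact ⟨0, fun _ => s, rfl, rfl, by omega⟩
  | @tail b c _ hR ih =>
    obtain ⟨n, f, h0, hn, hstep⟩ := ih
    refine ⟨n + 1, fun k => if k ≤ n then f k else c, by simp [h0],
      by show (if n + 1 ≤ n then f (n + 1) else c) = c; rw [if_neg (by omega)], ?_⟩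
    intro i hi
    show R' (if i ≤ n then f i else c) (if i + 1 ≤ n then f (i + 1) else c)
    rcases lt_or_eq_of_le (Nat.lt_succ_iff.mp hi) with hlt | hEq
    · rw [if_pos (by omega), if_pos (by omega)]
      exact hstep i hlt
    · subst hEq
      rw [if_pos le_rfl, if_neg (by omega), hn]
      exact hR



/-- Reachability as existence of a path of fixed length: for a relation `R` on a
finite type `V` with `card V = m ≥ 1` and `R'` the relation `R` augmented with the
self-loop `(t,t)`, the vertex `t` is reachable from `s` under `R` iff there is an
`R'`-path of length exactly `m` from `s` to `t`. -/
theorem reflTransGen_iff_exists_path_of_length_card {V : Type} [Fintype V] {m : ℕ}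
    (hm : Fintype.card V = m) (hm1 : 1 ≤ m) (R : V → V → Prop) (s t : V) :
    Relation.ReflTransGen R s t ↔
      ∃ f : Fin (m + 1) → V, f 0 = s ∧ f (Fin.last m) = t ∧
        ∀ i : Fin m,
          R (f i.castSucc) (f i.succ) ∨ (f i.castSucc = t ∧ f i.succ = t) := by
  constructor
  · intro h
    have h' : Relation.ReflTransGen (fun a b => R a b ∨ (a = t ∧ b = t)) s t :=
      Relation.ReflTransGen.mono (fun a b hab => Or.inl hab) s t h
    obtain ⟨n, hQn⟩ := aux_path_exists _ s t h'
    obtain ⟨k, hkm, hQk⟩ := aux_path_shrink hm (fun a b => R a b ∨ (a = t ∧ b = t)) s t n hQn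
    -- pad from k up to m
    have hQm : ∀ d, k + d ≤ m → ∃ f : ℕ → V, f 0 = s ∧ f (k + d) = t ∧
        ∀ i < k + d, R (f i) (f (i + 1)) ∨ (f i = t ∧ f (i + 1) = t) := by
      intro d
      induction d with
      | zero => intro _; exact hQk
      | succ d ihd =>
        intro hle
        obtain ⟨f, h0, hn, hstep⟩ := ihd (by omega)
        refine ⟨fun j => if j ≤ k + d then f j else t, by simp [h0],
          by show (if k + (d + 1) ≤ k + d then f (k + (d + 1)) else t) = t
             rw [if_neg (by omega)], ?_⟩
        intro i hi
        show (R (if i ≤ k + d then f i else t) (if i + 1 ≤ k + d then f (i + 1) else t)) ∨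
          ((if i ≤ k + d then f i else t) = t ∧ (if i + 1 ≤ k + d then f (i + 1) else t) = t)
        rcases lt_or_eq_of_le (Nat.lt_succ_iff.mp (by omega : i < k + d + 1)) with hlt | hEq
        · rw [if_pos (by omega), if_pos (by omega)]
          exact hstep i hlt
        · subst hEq
          rw [if_pos le_rfl, if_neg (by omega), hn]
          exact Or.inr ⟨rfl, rfl⟩
    obtain ⟨f, h0, hmn, hstep⟩ := hQm (m - k) (by omega)
    rw [show k + (m - k) = m by omega] at hmn hstep
    exact ⟨fun i => f i.val, by simp [h0], by simp [hmn], fun i => by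
      simpa using hstep i.val i.isLt⟩
  · rintro ⟨f, h0, hlast, hstep⟩
    have key : ∀ n : ℕ, ∀ hn : n ≤ m, Relation.ReflTransGen R s (f ⟨n, by omega⟩) ∨
        f ⟨n, by omega⟩ = t ∧ Relation.ReflTransGen R s t := by
      intro n
      induction n with
      | zero =>
        intro _
        exact Or.inl (by rw [show (⟨0, by omega⟩ : Fin (m+1)) = 0 from rfl, h0])
      | succ n ihn =>
        intro hn
        have step := hstep ⟨n, by omega⟩
        have hcs : (⟨n, by omega⟩ : Fin m).castSucc = ⟨n, by omega⟩ := rfl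
        have hsc : (⟨n, by omega⟩ : Fin m).succ = ⟨n + 1, by omega⟩ := rfl
        rw [hcs, hsc] at step
        rcases ihn (by omega) with ih | ⟨hft, hrt⟩
        · rcases step with hR | ⟨hb, hc⟩
          · exact Or.inl (ih.tail hR)
          · exact Or.inr ⟨hc, by rwa [hb] at ih⟩
        · rcases step with hR | ⟨hb, hc⟩
          · rcases eq_or_ne (f ⟨n + 1, by omega⟩) t with he | he
            · exact Or.inr ⟨he, hrt⟩
            · refine Or.inl ?_
              rw [hft] at hR
              exact hrt.tail hR
          · exact Or.inr ⟨hc, hrt⟩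
    rcases key m le_rfl with h | ⟨_, h⟩
    · rwa [show (⟨m, by omega⟩ : Fin (m+1)) = Fin.last m from rfl, hlast] at h
    · exact h
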